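/- Two-sided polynomial bounds on the corrected scale factor (Appendix, equation (A-3a)): Under the ODE hypotheses, there exist constants C₁ = C₁(κ,λ) > 0 and C₂ = C₂(κ,λ) > 0 such that for all t ≥ 0: C₁ (1+t)^κ ≤ θ(t) ≤ C₂ (1+t)^κ, and θ'(t) ≥ 0. -/

import Mathlib

open Real

noncomputable section

/-- κ = (1+λ)/(nγ−n+2) -/
def kpp (n : ℕ) (γ lam : ℝ) : ℝ := (1 + lam) / ((n : ℝ) * γ - (n : ℝ) + 2)

/-- the hypotheses on the corrected scale factor θ = ν + h. -/
def ThetaODE (n : ℕ) (γ lam : ℝ) (θ : ℝ → ℝ) : Prop :=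
  ContDiff ℝ 2 θ ∧ (∀ t : ℝ, 0 ≤ t → 0 < θ t) ∧ θ 0 = 1 ∧ deriv θ 0 = kpp n γ lam ∧
    ∀ t : ℝ, 0 ≤ t →
      deriv (deriv θ) t + (1 + t) ^ (-lam) * deriv θ t
        = kpp n γ lam * θ t ^ ((n : ℝ) - (n : ℝ) * γ - 1)

lemma mono_from_deriv {f g : ℝ → ℝ}
    (hfc : ContinuousOn f (Set.Ici 0))
    (hd : ∀ t ∈ Set.Ioi (0:ℝ), HasDerivAt f (g t) t)
    (hg : ∀ t ∈ Set.Ioi (0:ℝ), 0 ≤ g t) :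
    ∀ t ∈ Set.Ici (0:ℝ), f 0 ≤ f t := by
  intro t ht
  have hmono : MonotoneOn f (Set.Ici 0) := by
    apply monotoneOn_of_deriv_nonneg (convex_Ici 0) hfc
    · intro x hx
      rw [interior_Ici] at hx
      exact (hd x hx).differentiableAt.differentiableWithinAt
    · intro x hx
      rw [interior_Ici] at hx
      rw [(hd x hx).deriv]
      exact hg x hx
  exact hmono Set.self_mem_Ici ht ht

lemma hasDerivAt_one_add_rpow {t a : ℝ} (h : 0 < 1 + t) :
    HasDerivAt (fun s : ℝ => (1 + s) ^ a) (a * (1 + t) ^ (a - 1)) t := by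
  have h1 : HasDerivAt (fun s : ℝ => 1 + s) 1 t := (hasDerivAt_id t).const_add 1
  have h2 := h1.rpow_const (p := a) (Or.inl h.ne')
  simpa [mul_comm] using h2

open Set in
set_option maxHeartbeats 2000000 in
/-- **Appendix, equation (A-3a)** (two-sided polynomial bounds on θ):
there are C₁, C₂ > 0 depending only on κ, λ such that
C₁ (1+t)^κ ≤ θ(t) ≤ C₂ (1+t)^κ and θ'(t) ≥ 0 for all t ≥ 0. -/
theorem theta_two_sided_bounds
    (n : ℕ) (hn : n = 2 ∨ n = 3) (γ lam : ℝ)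
    (hγ : 1 < γ) (hlam0 : 0 ≤ lam) (hlam1 : lam < 1)
    (θ : ℝ → ℝ) (hθ : ThetaODE n γ lam θ) :
    ∃ C₁ C₂ : ℝ, 0 < C₁ ∧ 0 < C₂ ∧ ∀ t : ℝ, 0 ≤ t →
      C₁ * (1 + t) ^ kpp n γ lam ≤ θ t ∧
      θ t ≤ C₂ * (1 + t) ^ kpp n γ lam ∧
      0 ≤ deriv θ t := by
  obtain ⟨hsmooth, hpos, hθ0, hdθ0, hode⟩ := hθ
  set p : ℝ := (n : ℝ) * γ - (n : ℝ) + 2 with hpdef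
  have hk_eq : kpp n γ lam = (1 + lam) / p := rfl
  set k : ℝ := kpp n γ lam with hkdef
  have hp2 : 2 < p := by
    rcases hn with rfl | rfl <;> rw [hpdef] <;> push_cast <;> nlinarith
  have hp0 : 0 < p := by linarith
  have hm0 : (0:ℝ) < 1 + lam := by linarith
  have h1l : (0:ℝ) < 1 - lam := by linarith
  have hk0 : 0 < k := by rw [hk_eq]; exact div_pos hm0 hp0
  have hk1 : k < 1 := by
    rw [hk_eq, div_lt_one hp0]; linarith
  have hkp : k * p = 1 + lam := by
    rw [hk_eq]; field_simp
  have hexpeq : (n : ℝ) - (n : ℝ) * γ - 1 = 1 - p := by rw [hpdef]; ring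
  -- smoothness facts
  have hθdiff : Differentiable ℝ θ := hsmooth.differentiable (by norm_num)
  have h2 : ContDiff ℝ ((1 : WithTop ℕ∞) + 1) θ := by
    rw [one_add_one_eq_two]; exact hsmooth
  have hC1 : ContDiff ℝ 1 (deriv θ) := (contDiff_succ_iff_deriv.mp h2).2.2
  have hudiff : Differentiable ℝ (deriv θ) := hC1.differentiable one_ne_zero
  have hucont : Continuous (deriv θ) := hudiff.continuous
  have hθAt : ∀ t : ℝ, HasDerivAt θ (deriv θ t) t := fun t => (hθdiff t).hasDerivAt
  have huAt : ∀ t : ℝ, HasDerivAt (deriv θ) (deriv (deriv θ) t) t :=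
    fun t => (hudiff t).hasDerivAt
  -- the ODE, rewritten
  have hode' : ∀ t : ℝ, 0 ≤ t →
      deriv (deriv θ) t = k * θ t ^ (1 - p) - (1 + t) ^ (-lam) * deriv θ t := by
    intro t ht
    have := hode t ht
    rw [hexpeq] at this
    linarith
  -- the integrating factor
  set E : ℝ → ℝ := fun t => ((1 + t) ^ (1 - lam) - 1) / (1 - lam) with hE
  have hE0 : E 0 = 0 := by simp [hE]
  have hEAt : ∀ t ∈ Ioi (0:ℝ), HasDerivAt E ((1 + t) ^ (-lam)) t := by
    intro t ht
    have h1t : (0:ℝ) < 1 + t := by have := mem_Ioi.mp ht; linarith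
    have h2' := ((hasDerivAt_one_add_rpow (a := 1 - lam) h1t).sub_const 1).div_const (1 - lam)
    have : (1 - lam) * (1 + t) ^ (1 - lam - 1) / (1 - lam) = (1 + t) ^ (-lam) := by
      rw [show (1:ℝ) - lam - 1 = -lam by ring]
      field_simp
    rwa [this] at h2'
  have hEcont : Continuous E := by
    rw [hE]
    have : Continuous fun t : ℝ => (1 + t) ^ (1 - lam) := by
      refine continuous_iff_continuousAt.mpr fun x => ?_
      exact (Real.continuousAt_rpow_const _ _ (Or.inr (by linarith))).comp
        (by fun_prop)
    fun_prop
  have hExpEpos : ∀ t : ℝ, 0 < Real.exp (E t) := fun t => Real.exp_pos _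
  have hExpEAt : ∀ t ∈ Ioi (0:ℝ), HasDerivAt (fun s => Real.exp (E s))
      (Real.exp (E t) * (1 + t) ^ (-lam)) t := fun t ht => (hEAt t ht).exp
  -- A = e^E θ' is monotone; θ' ≥ 0; θ ≥ 1
  have hAAt : ∀ t ∈ Ioi (0:ℝ), HasDerivAt (fun s => Real.exp (E s) * deriv θ s)
      (k * Real.exp (E t) * θ t ^ (1 - p)) t := by
    intro t ht
    have ht0 : (0:ℝ) < t := mem_Ioi.mp ht
    have h : HasDerivAt (fun s => Real.exp (E s) * deriv θ s) _ t := (hExpEAt t ht).mul (huAt t)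
    rw [hode' t ht0.le] at h
    convert h using 1
    ring
  have hApos : ∀ t ∈ Ioi (0:ℝ), 0 ≤ k * Real.exp (E t) * θ t ^ (1 - p) := by
    intro t ht
    have := Real.rpow_pos_of_pos (hpos t (mem_Ioi.mp ht).le) (1 - p)
    positivity
  have hAcont : ContinuousOn (fun s => Real.exp (E s) * deriv θ s) (Ici 0) :=
    ((hEcont.rexp).mul hucont).continuousOn
  have hA0 : Real.exp (E 0) * deriv θ 0 = k := by
    rw [hE0, hdθ0]; simp
  have hAlb : ∀ t ∈ Ici (0:ℝ), k ≤ Real.exp (E t) * deriv θ t := by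
    intro t ht
    have := mono_from_deriv hAcont hAAt hApos t ht
    rwa [hA0] at this
  have hu0 : ∀ t : ℝ, 0 ≤ t → 0 ≤ deriv θ t := by
    intro t ht
    have h1 := hAlb t ht
    nlinarith [hExpEpos t]
  have hθ1 : ∀ t ∈ Ici (0:ℝ), 1 ≤ θ t := by
    intro t ht
    have := mono_from_deriv (hθdiff.continuous.continuousOn)
      (fun s _ => hθAt s) (fun s hs => hu0 s (mem_Ioi.mp hs).le) t ht
    rwa [hθ0] at this
  have h1p : (1:ℝ) ≤ p - 1 := by linarith
  -- step 2: the lower bound  θ^p ≥ (1+t)^(1+lam)/(1+lam)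
  have hθrw : Continuous fun s : ℝ => θ s ^ (p-1) := by
    refine continuous_iff_continuousAt.mpr fun x => ?_
    exact (Real.continuousAt_rpow_const _ _ (Or.inr (by linarith))).comp
      (hθdiff.continuous.continuousAt)
  have hXlam : Continuous fun s : ℝ => (1+s) ^ lam := by
    refine continuous_iff_continuousAt.mpr fun x => ?_
    exact (Real.continuousAt_rpow_const _ _ (Or.inr hlam0)).comp (by fun_prop)
  have hVAt : ∀ t ∈ Ioi (0:ℝ), HasDerivAt
      (fun s => Real.exp (E s) * (θ s ^ (p-1) * deriv θ s)
          - k / (1+lam) * ((1+s) ^ lam * Real.exp (E s)))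
      (Real.exp (E t) * ((p-1) * θ t ^ (p-2) * (deriv θ t * deriv θ t) + k)
          - k / (1+lam) * ((lam * (1+t) ^ (lam-1)) * Real.exp (E t)
              + (1+t) ^ lam * (Real.exp (E t) * (1+t) ^ (-lam)))) t := by
    intro t ht
    have ht0 : (0:ℝ) < t := mem_Ioi.mp ht
    have h1t : (0:ℝ) < 1 + t := by linarith
    have hθt : 0 < θ t := hpos t ht0.le
    have hpow := (hθAt t).rpow_const (p := p - 1) (Or.inr h1p)
    rw [show p - 1 - 1 = p - 2 by ring] at hpow
    have hin := hpow.mul (huAt t)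
    have htot : HasDerivAt (fun s => Real.exp (E s) * (θ s ^ (p-1) * deriv θ s)) _ t :=
      (hExpEAt t ht).mul hin
    have hW : HasDerivAt (fun s => k / (1+lam) * ((1+s) ^ lam * Real.exp (E s))) _ t :=
      ((hasDerivAt_one_add_rpow (a := lam) h1t).mul (hExpEAt t ht)).const_mul
      (k / (1+lam))
    refine HasDerivAt.sub ?_ hW
    rw [hode' t ht0.le] at htot
    refine htot.congr_deriv ?_
    have hpow1 : θ t ^ (p-1) * θ t ^ (1-p) = 1 := by
      rw [← Real.rpow_add hθt]
      norm_num
    linear_combination (Real.exp (E t) * k) * hpow1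
  have hVg : ∀ t ∈ Ioi (0:ℝ), 0 ≤
      Real.exp (E t) * ((p-1) * θ t ^ (p-2) * (deriv θ t * deriv θ t) + k)
          - k / (1+lam) * ((lam * (1+t) ^ (lam-1)) * Real.exp (E t)
              + (1+t) ^ lam * (Real.exp (E t) * (1+t) ^ (-lam))) := by
    intro t ht
    have ht0 : (0:ℝ) < t := mem_Ioi.mp ht
    have h1t : (0:ℝ) < 1 + t := by linarith
    have hθt : 0 < θ t := hpos t ht0.le
    have hab : (1+t) ^ lam * (1+t) ^ (-lam) = 1 := by
      rw [← Real.rpow_add h1t]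
      norm_num
    have hc1 : (1+t) ^ (lam-1) ≤ 1 :=
      Real.rpow_le_one_of_one_le_of_nonpos (by linarith) (by linarith)
    have hterm : 0 ≤ (p-1) * θ t ^ (p-2) * (deriv θ t * deriv θ t) :=
      mul_nonneg (mul_nonneg (by linarith) (Real.rpow_nonneg hθt.le _))
        (mul_self_nonneg _)
    have hE1 : lam * (1+t) ^ (lam-1) * Real.exp (E t)
        + (1+t) ^ lam * (Real.exp (E t) * (1+t) ^ (-lam))
        ≤ (1 + lam) * Real.exp (E t) := by
      have h1 : (1+t) ^ lam * (Real.exp (E t) * (1+t) ^ (-lam)) = Real.exp (E t) := by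
        rw [show (1+t) ^ lam * (Real.exp (E t) * (1+t) ^ (-lam))
            = ((1+t) ^ lam * (1+t) ^ (-lam)) * Real.exp (E t) by ring, hab, one_mul]
      rw [h1]
      have hll : lam * (1+t) ^ (lam-1) ≤ lam := by nlinarith [hc1, hlam0]
      nlinarith [hExpEpos t, hll]
    have hE2 : k / (1+lam) * ((lam * (1+t) ^ (lam-1)) * Real.exp (E t)
        + (1+t) ^ lam * (Real.exp (E t) * (1+t) ^ (-lam)))
        ≤ k / (1+lam) * ((1 + lam) * Real.exp (E t)) :=
      mul_le_mul_of_nonneg_left hE1 (by positivity)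
    have hE3 : k / (1+lam) * ((1 + lam) * Real.exp (E t)) = k * Real.exp (E t) := by
      field_simp
    have key := hE2.trans (le_of_eq hE3)
    have hterm2 := mul_nonneg (le_of_lt (hExpEpos t)) hterm
    nlinarith [key, hterm2]
  have hVcont : ContinuousOn (fun s => Real.exp (E s) * (θ s ^ (p-1) * deriv θ s)
      - k / (1+lam) * ((1+s) ^ lam * Real.exp (E s))) (Ici 0) := by
    apply Continuous.continuousOn
    fun_prop
  have hV0 : Real.exp (E 0) * (θ 0 ^ (p-1) * deriv θ 0)
      - k / (1+lam) * ((1+0) ^ lam * Real.exp (E 0)) = k - k / (1+lam) := by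
    rw [hE0, hθ0, hdθ0]
    norm_num
  have hkm : k / (1+lam) ≤ k := by
    rw [div_le_iff₀ hm0]
    nlinarith [mul_nonneg hk0.le hlam0]
  have hVlb : ∀ t ∈ Ici (0:ℝ), k / (1+lam) * (1+t) ^ lam ≤ θ t ^ (p-1) * deriv θ t := by
    intro t ht
    have h1t : (0:ℝ) < 1 + t := by have := mem_Ici.mp ht; linarith
    have hmono := mono_from_deriv hVcont hVAt hVg t ht
    rw [hV0] at hmono
    have h2 : k / (1+lam) * (1+t) ^ lam * Real.exp (E t)
        ≤ θ t ^ (p-1) * deriv θ t * Real.exp (E t) := by nlinarith [hmono, hkm]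
    exact le_of_mul_le_mul_right h2 (hExpEpos t)
  have hkm1 : k / (1+lam) * p = 1 := by
    rw [div_mul_eq_mul_div, hkp]
    field_simp
  -- step 3 : θ^p ≥ (1+t)^(1+lam)/(1+lam)
  have hZAt : ∀ t ∈ Ioi (0:ℝ), HasDerivAt
      (fun s => θ s ^ p - 1 / (1+lam) * (1+s) ^ (1+lam))
      (deriv θ t * p * θ t ^ (p-1) - 1 / (1+lam) * ((1+lam) * (1+t) ^ lam)) t := by
    intro t ht
    have ht0 : (0:ℝ) < t := mem_Ioi.mp ht
    have h1t : (0:ℝ) < 1 + t := by linarith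
    have hZ := (hθAt t).rpow_const (p := p) (Or.inr (by linarith))
    have hP := (hasDerivAt_one_add_rpow (a := 1 + lam) h1t).const_mul (1 / (1+lam))
    rw [show (1:ℝ) + lam - 1 = lam by ring] at hP
    exact hZ.sub hP
  have hZg : ∀ t ∈ Ioi (0:ℝ), 0 ≤
      deriv θ t * p * θ t ^ (p-1) - 1 / (1+lam) * ((1+lam) * (1+t) ^ lam) := by
    intro t ht
    have ht0 : (0:ℝ) < t := mem_Ioi.mp ht
    have h1t : (0:ℝ) < 1 + t := by linarith
    have hV := hVlb t (le_of_lt ht0)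
    have h1 : p * (k / (1+lam) * (1+t) ^ lam) ≤ p * (θ t ^ (p-1) * deriv θ t) :=
      mul_le_mul_of_nonneg_left hV hp0.le
    have h2 : p * (k / (1+lam) * (1+t) ^ lam) = (1+t) ^ lam := by
      rw [show p * (k / (1+lam) * (1+t) ^ lam) = (k / (1+lam) * p) * (1+t) ^ lam by ring,
        hkm1, one_mul]
    have h3 : 1 / (1+lam) * ((1+lam) * (1+t) ^ lam) = (1+t) ^ lam := by
      field_simp
    linarith [h1, h2, h3]
  have hZcont : ContinuousOn (fun s => θ s ^ p - 1 / (1+lam) * (1+s) ^ (1+lam)) (Ici 0) := by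
    apply Continuous.continuousOn
    have c1 : Continuous fun s : ℝ => θ s ^ p := by
      refine continuous_iff_continuousAt.mpr fun x => ?_
      exact (Real.continuousAt_rpow_const _ _ (Or.inr (by linarith))).comp
        (hθdiff.continuous.continuousAt)
    have c2 : Continuous fun s : ℝ => (1+s) ^ (1+lam) := by
      refine continuous_iff_continuousAt.mpr fun x => ?_
      exact (Real.continuousAt_rpow_const _ _ (Or.inr (by linarith))).comp (by fun_prop)
    fun_prop
  have hZ0 : θ 0 ^ p - 1 / (1+lam) * (1+0) ^ (1+lam) = 1 - 1 / (1+lam) := by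
    rw [hθ0]
    norm_num
  have hZlb : ∀ t : ℝ, 0 ≤ t → 1 / (1+lam) * (1+t) ^ (1+lam) ≤ θ t ^ p := by
    intro t ht
    have hmono := mono_from_deriv hZcont hZAt hZg t ht
    rw [hZ0] at hmono
    have : 1 / (1+lam) ≤ 1 := by
      rw [div_le_one hm0]
      linarith
    linarith
  -- step 4 : the lower bound with C₁
  set c1 : ℝ := (1 / (1+lam)) ^ (1/p) with hc1def
  have hc1pos : 0 < c1 := Real.rpow_pos_of_pos (by positivity) _
  have hlow : ∀ t : ℝ, 0 ≤ t → c1 * (1+t) ^ k ≤ θ t := by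
    intro t ht
    have h1t : (0:ℝ) < 1 + t := by linarith
    have hθt : 0 < θ t := hpos t ht
    have h := Real.rpow_le_rpow (by positivity) (hZlb t ht) (by positivity : (0:ℝ) ≤ 1/p)
    rw [Real.mul_rpow (by positivity) (by positivity), ← Real.rpow_mul h1t.le,
      ← Real.rpow_mul hθt.le, show p * (1/p) = 1 by field_simp, Real.rpow_one,
      show (1+lam) * (1/p) = k by rw [hk_eq]; ring] at h
    exact h
  -- step 5 : upper bound on θ^(1-p)
  set c : ℝ := c1 ^ (1-p) with hcdef
  have hcpos : 0 < c := Real.rpow_pos_of_pos hc1pos _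
  have hθub : ∀ t : ℝ, 0 ≤ t → θ t ^ (1-p) ≤ c * (1+t) ^ (k-1-lam) := by
    intro t ht
    have h1t : (0:ℝ) < 1 + t := by linarith
    have hθt : 0 < θ t := hpos t ht
    have h := Real.rpow_le_rpow_of_nonpos (by positivity) (hlow t ht)
      (by linarith : 1 - p ≤ 0)
    rw [Real.mul_rpow hc1pos.le (by positivity), ← Real.rpow_mul h1t.le,
      show k * (1-p) = k-1-lam by linear_combination -hkp] at h
    exact h
  -- step 6 : e^E θ' ≤ c e^E (1+t)^(k-1) + (k - c)
  have hF4At : ∀ t ∈ Ioi (0:ℝ), HasDerivAt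
      (fun s => c * (Real.exp (E s) * (1+s) ^ (k-1)) - Real.exp (E s) * deriv θ s)
      (c * (Real.exp (E t) * (1+t) ^ (-lam) * (1+t) ^ (k-1)
          + Real.exp (E t) * ((k-1) * (1+t) ^ (k-2)))
        - k * Real.exp (E t) * θ t ^ (1-p)) t := by
    intro t ht
    have ht0 : (0:ℝ) < t := mem_Ioi.mp ht
    have h1t : (0:ℝ) < 1 + t := by linarith
    have hB := (hasDerivAt_one_add_rpow (a := k-1) h1t)
    rw [show k - 1 - 1 = k - 2 by ring] at hB
    exact (((hExpEAt t ht).mul hB).const_mul c).sub (hAAt t ht)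
  have hF4g : ∀ t ∈ Ioi (0:ℝ), 0 ≤
      c * (Real.exp (E t) * (1+t) ^ (-lam) * (1+t) ^ (k-1)
          + Real.exp (E t) * ((k-1) * (1+t) ^ (k-2)))
        - k * Real.exp (E t) * θ t ^ (1-p) := by
    intro t ht
    have ht0 : (0:ℝ) < t := mem_Ioi.mp ht
    have h1t : (0:ℝ) < 1 + t := by linarith
    have e0 : Real.exp (E t) * (1+t) ^ (-lam) * (1+t) ^ (k-1)
        = Real.exp (E t) * (1+t) ^ (k-1-lam) := by
      rw [mul_assoc, ← Real.rpow_add h1t]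
      congr 2
      ring
    rw [e0]
    have haux2 : (1+t) ^ (k-2) ≤ (1+t) ^ (k-1-lam) :=
      Real.rpow_le_rpow_of_exponent_le (by linarith) (by linarith)
    have e1 : (k-1) * (1+t) ^ (k-1-lam) ≤ (k-1) * (1+t) ^ (k-2) := by
      nlinarith [haux2]
    have e2 : k * Real.exp (E t) * θ t ^ (1-p)
        ≤ c * (k * (Real.exp (E t) * (1+t) ^ (k-1-lam))) := by
      have hb := hθub t ht0.le
      nlinarith [mul_nonneg hk0.le (hExpEpos t).le]
    have e3 : c * (k * (Real.exp (E t) * (1+t) ^ (k-1-lam)))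
        ≤ c * (Real.exp (E t) * (1+t) ^ (k-1-lam)
            + Real.exp (E t) * ((k-1) * (1+t) ^ (k-2))) := by
      have := mul_nonneg hcpos.le (hExpEpos t).le
      nlinarith [e1, mul_nonneg hcpos.le (hExpEpos t).le]
    linarith [e2, e3]
  have hF4cont : ContinuousOn
      (fun s => c * (Real.exp (E s) * (1+s) ^ (k-1)) - Real.exp (E s) * deriv θ s)
      (Ici 0) := by
    have c2 : ContinuousOn (fun s : ℝ => (1+s) ^ (k-1)) (Ici 0) := by
      apply ContinuousOn.rpow_const (by fun_prop)
      intro x hx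
      have : (0:ℝ) ≤ x := hx
      left
      positivity
    exact (((hEcont.rexp).continuousOn.mul c2).const_smul c).sub
      ((hEcont.rexp).mul hucont).continuousOn
  have hF40 : c * (Real.exp (E 0) * (1+0) ^ (k-1)) - Real.exp (E 0) * deriv θ 0
      = c - k := by
    rw [hE0, hdθ0]
    norm_num
  have hAub : ∀ t : ℝ, 0 ≤ t →
      Real.exp (E t) * deriv θ t ≤ c * (Real.exp (E t) * (1+t) ^ (k-1)) + k := by
    intro t ht
    have hmono := mono_from_deriv hF4cont hF4At hF4g t ht
    rw [hF40] at hmono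
    linarith [hcpos]
  -- step 7 : e^E ≥ 1 + t
  have hlogE : ∀ t : ℝ, 0 ≤ t → 1 + t ≤ Real.exp (E t) := by
    intro t ht
    have h1t : (0:ℝ) < 1 + t := by linarith
    have hx := Real.add_one_le_exp ((1-lam) * Real.log (1+t))
    rw [show (1-lam) * Real.log (1+t) = Real.log (1+t) * (1-lam) by ring,
      ← Real.rpow_def_of_pos h1t] at hx
    have hEt : Real.log (1+t) ≤ E t := by
      have : E t = ((1+t) ^ (1-lam) - 1) / (1-lam) := by simp only [hE]
      rw [this, le_div_iff₀ h1l]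
      nlinarith [hx]
    calc 1 + t = Real.exp (Real.log (1+t)) := (Real.exp_log h1t).symm
      _ ≤ Real.exp (E t) := Real.exp_le_exp.mpr hEt
  -- step 8 : θ' ≤ (c+k)(1+t)^(k-1)
  have hu_ub : ∀ t : ℝ, 0 ≤ t → deriv θ t ≤ (c + k) * (1+t) ^ (k-1) := by
    intro t ht
    have h1t : (0:ℝ) < 1 + t := by linarith
    have hq : (1+t) ^ (k-1) * (1+t) ^ (1-k) = 1 := by
      rw [← Real.rpow_add h1t]
      norm_num
    have hr : (1+t) ^ (1-k) ≤ Real.exp (E t) := by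
      calc (1+t) ^ (1-k) ≤ (1+t) ^ (1:ℝ) :=
            Real.rpow_le_rpow_of_exponent_le (by linarith) (by linarith)
        _ = 1 + t := Real.rpow_one _
        _ ≤ Real.exp (E t) := hlogE t ht
    have hs : 1 ≤ (1+t) ^ (k-1) * Real.exp (E t) := by
      calc (1:ℝ) = (1+t) ^ (k-1) * (1+t) ^ (1-k) := hq.symm
        _ ≤ (1+t) ^ (k-1) * Real.exp (E t) :=
            mul_le_mul_of_nonneg_left hr (Real.rpow_nonneg (by linarith) _)
    have hks : k * 1 ≤ k * ((1+t) ^ (k-1) * Real.exp (E t)) :=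
      mul_le_mul_of_nonneg_left hs hk0.le
    have hA := hAub t ht
    have h2 : deriv θ t * Real.exp (E t) ≤ (c + k) * (1+t) ^ (k-1) * Real.exp (E t) := by
      nlinarith [hA, hks]
    exact le_of_mul_le_mul_right h2 (hExpEpos t)
  -- step 9 : the upper bound on θ
  have hckk : 1 ≤ (c + k) / k := by
    rw [le_div_iff₀ hk0]
    linarith [hcpos]
  have hF5At : ∀ t ∈ Ioi (0:ℝ), HasDerivAt
      (fun s => (c + k) / k * (1+s) ^ k - θ s)
      ((c + k) / k * (k * (1+t) ^ (k-1)) - deriv θ t) t := by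
    intro t ht
    have ht0 : (0:ℝ) < t := mem_Ioi.mp ht
    have h1t : (0:ℝ) < 1 + t := by linarith
    exact ((hasDerivAt_one_add_rpow (a := k) h1t).const_mul ((c + k)/k)).sub (hθAt t)
  have hF5g : ∀ t ∈ Ioi (0:ℝ), 0 ≤
      (c + k) / k * (k * (1+t) ^ (k-1)) - deriv θ t := by
    intro t ht
    have ht0 : (0:ℝ) < t := mem_Ioi.mp ht
    have h1 : (c + k) / k * (k * (1+t) ^ (k-1)) = (c + k) * (1+t) ^ (k-1) := by
      field_simp
    rw [h1]
    linarith [hu_ub t ht0.le]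
  have hF5cont : ContinuousOn (fun s => (c + k) / k * (1+s) ^ k - θ s) (Ici 0) := by
    have c2 : ContinuousOn (fun s : ℝ => (1+s) ^ k) (Ici 0) := by
      apply ContinuousOn.rpow_const (by fun_prop)
      intro x hx
      exact Or.inr hk0.le
    exact (c2.const_smul ((c+k)/k)).sub hθdiff.continuous.continuousOn
  have hF50 : (c + k) / k * (1+0) ^ k - θ 0 = (c + k)/k - 1 := by
    rw [hθ0]
    norm_num
  have hup : ∀ t : ℝ, 0 ≤ t → θ t ≤ (c + k) / k * (1+t) ^ k := by
    intro t ht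
    have hmono := mono_from_deriv hF5cont hF5At hF5g t ht
    rw [hF50] at hmono
    linarith [hckk]
  exact ⟨c1, (c + k)/k, hc1pos, by positivity, fun t ht =>
    ⟨hlow t ht, hup t ht, hu0 t ht⟩⟩
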